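/- Let σ and D be real constants and let q = q(u) be a differentiable, nowhere-zero function on an open interval I satisfying 2·(D²·q(u)⁴ + σ)·q'(u) + q(u)³ = 0 for all u ∈ I. Then there exists a constant C such that D²·q(u)⁴ + (u − C)·q(u)² − σ = 0 for all u ∈ I. -/

import Mathlib

/-- Integration of `2(D²q⁴ + σ)q' + q³ = 0`: the solutions satisfy the implicit
algebraic equation `D²q⁴ + (u − C)q² − σ = 0` for some constant `C`. -/
theorem stmt_13 (σ D : ℝ) (a b : ℝ) (q : ℝ → ℝ)
    (hq : ∀ u ∈ Set.Ioo a b, DifferentiableAt ℝ q u)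
    (hq0 : ∀ u ∈ Set.Ioo a b, q u ≠ 0)
    (heq : ∀ u ∈ Set.Ioo a b,
        2 * (D ^ 2 * (q u) ^ 4 + σ) * deriv q u + (q u) ^ 3 = 0) :
    ∃ C : ℝ, ∀ u ∈ Set.Ioo a b,
        D ^ 2 * (q u) ^ 4 + (u - C) * (q u) ^ 2 - σ = 0 := by
  set g : ℝ → ℝ := fun u => D ^ 2 * (q u) ^ 2 + u - σ * ((q u) ^ 2)⁻¹ with hg
  have key : ∀ u ∈ Set.Ioo a b, HasDerivAt g 0 u := by
    intro u hu
    have hqd := (hq u hu).hasDerivAt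
    have h0 := hq0 u hu
    have hsq : HasDerivAt (fun u => (q u) ^ 2) (2 * q u * deriv q u) u := by
      simpa [mul_comm, mul_assoc] using hqd.fun_pow 2
    have hinv : HasDerivAt (fun u => ((q u) ^ 2)⁻¹)
        (-(2 * q u * deriv q u) / ((q u) ^ 2) ^ 2) u :=
      hsq.inv (pow_ne_zero 2 h0)
    have h1 : HasDerivAt g
        (D ^ 2 * (2 * q u * deriv q u) + 1 -
          σ * (-(2 * q u * deriv q u) / ((q u) ^ 2) ^ 2)) u :=
      (((hsq.const_mul (D ^ 2)).add (hasDerivAt_id u)).sub (hinv.const_mul σ))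
    have hval : D ^ 2 * (2 * q u * deriv q u) + 1 -
          σ * (-(2 * q u * deriv q u) / ((q u) ^ 2) ^ 2) = 0 := by
      have := heq u hu
      field_simp
      linear_combination this
    rwa [hval] at h1
  rcases Set.eq_empty_or_nonempty (Set.Ioo a b) with he | ⟨u₀, hu₀⟩
  · exact ⟨0, fun u hu => by rw [he] at hu; exact absurd hu (Set.notMem_empty u)⟩
  · refine ⟨g u₀, fun u hu => ?_⟩
    have hconst : g u = g u₀ := by
      have hdo : DifferentiableOn ℝ g (Set.Ioo a b) := fun x hx =>
        (key x hx).differentiableAt.differentiableWithinAt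
      have hfd : ∀ x ∈ Set.Ioo a b, fderivWithin ℝ g (Set.Ioo a b) x = 0 := by
        intro x hx
        rw [fderivWithin_of_isOpen isOpen_Ioo hx, (key x hx).hasFDerivAt.fderiv]
        ext
        simp
      exact (convex_Ioo a b).is_const_of_fderivWithin_eq_zero hdo hfd hu hu₀
    have h0 := hq0 u hu
    have : D ^ 2 * (q u) ^ 2 + u - σ * ((q u) ^ 2)⁻¹ = g u₀ := hconst
    field_simp at this
    nlinarith [this, pow_ne_zero 2 h0]
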